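/- For a polynomial P(z) = a_N ∏_{n=1}^N (z − z_n) with a_N ≠ 0 and P(0) ≠ 0, the areal Mahler measure satisfies log‖P‖₀ = log|a_0| + Σ_{|z_n|<1} ((|z_n|² − 1)/2 − log|z_n|), where a_0 = P(0). -/

import Mathlib

open MeasureTheory

open Real Set intervalIntegral

noncomputable def Complex.abs : AbsoluteValue ℂ ℝ := IsAbsoluteValue.toAbsoluteValue (norm : ℂ → ℝ)

@[simp] lemma Complex.abs_apply (z : ℂ) : Complex.abs z = ‖z‖ := rfl

lemma Complex.norm_eq_abs (z : ℂ) : ‖z‖ = Complex.abs z := rfl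

lemma Complex.abs_exp (z : ℂ) : Complex.abs (Complex.exp z) = Real.exp z.re := Complex.norm_exp z

lemma Complex.abs_ofReal (r : ℝ) : Complex.abs (r : ℂ) = |r| := Complex.norm_real r

lemma Complex.abs_conj (z : ℂ) : Complex.abs ((starRingEnd ℂ) z) = Complex.abs z := Complex.norm_conj z

lemma Complex.continuous_abs : Continuous Complex.abs := continuous_norm

lemma Complex.polarCoord_symm_abs (p : ℝ × ℝ) : Complex.abs (Complex.polarCoord.symm p) = |p.1| :=
  Complex.norm_polarCoord_symm p

lemma Complex.abs_re_le_abs (z : ℂ) : |z.re| ≤ Complex.abs z := Complex.abs_re_le_norm z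

lemma exp_int (n : ℕ) (hn : n ≠ 0) :
    ∫ θ in (-π)..π, Complex.exp ((n : ℂ) * Complex.I * θ) = 0 := by
  rw [integral_exp_mul_complex (by simp [Complex.I_ne_zero, hn])]
  have h1 : Complex.exp ((n:ℂ) * Complex.I * (π:ℂ)) = (-1 : ℂ) ^ n := by
    rw [show (n:ℂ) * Complex.I * (π:ℂ) = n * (π * Complex.I) by ring,
      Complex.exp_nat_mul, Complex.exp_pi_mul_I]
  have h2 : Complex.exp ((n:ℂ) * Complex.I * ((-π:ℝ):ℂ)) = (-1 : ℂ) ^ n := by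
    push_cast
    rw [show (n:ℂ) * Complex.I * (-(π:ℂ)) = n * (-(π * Complex.I)) by ring,
      Complex.exp_nat_mul, Complex.exp_neg, Complex.exp_pi_mul_I, inv_neg, inv_one]
  rw [h1, h2]
  simp

lemma lemA (u : ℂ) (hu : Complex.abs u < 1) :
    ∫ θ in Ioo (-π) π, Real.log (Complex.abs (1 - u * Complex.exp (θ * Complex.I))) = 0 := by
  set μ : Measure ℝ := volume.restrict (Ioo (-π) π)
  set F : ℕ → ℝ → ℝ := fun n θ => (((u * Complex.exp (θ * Complex.I)) ^ n / n : ℂ)).re with hF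
  have habs : ∀ θ : ℝ, Complex.abs (u * Complex.exp (θ * Complex.I)) = Complex.abs u := by
    intro θ; simp [Complex.abs_exp]
  have hptsum : ∀ θ : ℝ, HasSum (fun n => F n θ)
      (- Real.log (Complex.abs (1 - u * Complex.exp (θ * Complex.I)))) := by
    intro θ
    have h := Complex.hasSum_taylorSeries_neg_log (z := u * Complex.exp (θ * Complex.I))
      (by rw [Complex.norm_eq_abs, habs]; exact hu)
    have := h.mapL Complex.reCLM
    simpa [hF, Complex.log_re] using this
  have hcont : ∀ n, Continuous (F n) := by
    intro n
    apply Complex.continuous_re.comp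
    exact (((continuous_const.mul (Complex.continuous_exp.comp
      (Complex.continuous_ofReal.mul continuous_const))).pow n).div_const _)
  have hFint : ∀ n, Integrable (F n) μ := fun n =>
    ((hcont n).integrableOn_Icc (a := -π) (b := π)).mono_set Ioo_subset_Icc_self
  have hFbound : ∀ n θ, ‖F n θ‖ ≤ (Complex.abs u) ^ n := by
    intro n θ
    calc ‖F n θ‖ ≤ Complex.abs ((u * Complex.exp (θ * Complex.I)) ^ n / n) :=
          Complex.abs_re_le_abs _
      _ ≤ Complex.abs ((u * Complex.exp (θ * Complex.I)) ^ n) := by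
          rw [map_div₀]
          rcases Nat.eq_zero_or_pos n with rfl | hn
          · simp
          · apply div_le_self (by positivity)
            simpa using (Nat.one_le_cast (α := ℝ)).mpr hn
      _ = (Complex.abs u) ^ n := by rw [map_pow, habs]
  have hFsum : Summable fun n => ∫ θ, ‖F n θ‖ ∂μ := by
    apply Summable.of_nonneg_of_le (fun n => integral_nonneg fun θ => norm_nonneg _)
      (fun n => ?_) (summable_geometric_of_lt_one (by positivity) hu |>.mul_left (2*π))
    calc ∫ θ, ‖F n θ‖ ∂μ ≤ ∫ _, (Complex.abs u) ^ n ∂μ := by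
          apply integral_mono_of_nonneg (Filter.Eventually.of_forall fun θ => norm_nonneg _)
            (integrable_const _) (Filter.Eventually.of_forall fun θ => hFbound n θ)
      _ = (volume (Ioo (-π) π)).toReal * (Complex.abs u) ^ n := by
          simp [μ, mul_comm]
          rw [ENNReal.toReal_ofReal (by linarith [pi_pos]), max_eq_left (by linarith [pi_pos])]
          ring
      _ ≤ 2 * π * (Complex.abs u) ^ n := by
          gcongr
          rw [Real.volume_Ioo]
          rw [ENNReal.toReal_ofReal (by linarith [pi_pos])]
          ring_nf; exact le_refl _
  have hint0 : ∀ n, ∫ θ, F n θ ∂μ = 0 := by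
    intro n
    rcases Nat.eq_zero_or_pos n with rfl | hn
    · simp [hF]
    have hInt : Integrable (fun (θ : ℝ) => ((u * Complex.exp (θ * Complex.I)) ^ n / n : ℂ)) μ := by
      apply Integrable.mono_measure ?_ (Measure.restrict_mono Ioo_subset_Icc_self le_rfl)
      apply ContinuousOn.integrableOn_compact isCompact_Icc
      exact (((continuous_const.mul (Complex.continuous_exp.comp
        (Complex.continuous_ofReal.mul continuous_const))).pow n).div_const _).continuousOn
    have : ∫ θ, ((u * Complex.exp (θ * Complex.I)) ^ n / n : ℂ) ∂μ = 0 := by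
      have hrw : ∀ θ : ℝ, ((u * Complex.exp (θ * Complex.I)) ^ n / n : ℂ)
          = (u ^ n / n) * Complex.exp ((n:ℂ) * Complex.I * θ) := by
        intro θ
        rw [mul_pow, ← Complex.exp_nat_mul]
        ring_nf
      simp_rw [hrw]
      rw [MeasureTheory.integral_const_mul]
      have : ∫ θ, Complex.exp ((n:ℂ) * Complex.I * θ) ∂μ = 0 := by
        have := exp_int n hn.ne'
        rwa [intervalIntegral.integral_of_le (by linarith [pi_pos]),
          integral_Ioc_eq_integral_Ioo] at this
      rw [this, mul_zero]
    have hre := (integral_re hInt).symm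
    simp only [RCLike.re_to_complex] at hre
    rw [hF]
    simp only []
    rw [← hre, this]
    simp
  have hHS := hasSum_integral_of_summable_integral_norm hFint hFsum
  rw [show (∫ a, F · a ∂μ) = fun n => (0:ℝ) from funext hint0] at hHS
  have h0 : (∫ θ, (∑' n, F n θ) ∂μ) = 0 := hasSum_zero.unique hHS |>.symm
  have : ∀ θ : ℝ, (∑' n, F n θ) = - Real.log (Complex.abs (1 - u * Complex.exp (θ * Complex.I))) :=
    fun θ => (hptsum θ).tsum_eq
  rw [funext this] at h0
  rw [MeasureTheory.integral_neg] at h0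
  exact neg_eq_zero.mp h0

lemma ne_one_sub (u : ℂ) (hu : Complex.abs u < 1) (θ : ℝ) :
    1 - u * Complex.exp (θ * Complex.I) ≠ 0 := by
  intro h
  have : Complex.abs (u * Complex.exp (θ * Complex.I)) = 1 := by
    have : u * Complex.exp (θ * Complex.I) = 1 := by linear_combination -h
    rw [this]; simp
  rw [map_mul, Complex.abs_exp] at this
  simp at this
  nlinarith [hu, Complex.abs_apply u]

lemma contlog (u : ℂ) (hu : Complex.abs u < 1) :
    Continuous fun θ : ℝ => Real.log (Complex.abs (1 - u * Complex.exp (θ * Complex.I))) := by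
  have hg : Continuous fun θ : ℝ => 1 - u * Complex.exp (θ * Complex.I) :=
    continuous_const.sub (continuous_const.mul (Complex.continuous_exp.comp
      (Complex.continuous_ofReal.mul continuous_const)))
  rw [continuous_iff_continuousAt]
  intro θ
  have h1 : ContinuousAt (fun θ : ℝ => Complex.abs (1 - u * Complex.exp (θ * Complex.I))) θ :=
    (Complex.continuous_abs.comp hg).continuousAt
  exact ContinuousAt.comp (g := Real.log) (Real.continuousAt_log
    (Complex.abs.ne_zero (ne_one_sub u hu θ))) h1

lemma intA (u : ℂ) (hu : Complex.abs u < 1) :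
    IntegrableOn (fun θ : ℝ => Real.log (Complex.abs (1 - u * Complex.exp (θ * Complex.I))))
      (Ioo (-π) π) :=
  ((contlog u hu).integrableOn_Icc (a := -π) (b := π)).mono_set Ioo_subset_Icc_self

lemma vol_Ioo : volume.real (Ioo (-π) π) = 2 * π := by
  rw [Real.volume_real_Ioo, max_eq_left (by linarith [pi_pos])]
  ring

lemma lemB (r : ℝ) (c : ℂ) (hr : 0 < r) (hc : c ≠ 0) (hne : r ≠ Complex.abs c) :
    ∫ θ in Ioo (-π) π, Real.log (Complex.abs ((r : ℂ) * Complex.exp (θ * Complex.I) - c)) =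
      2 * π * max (Real.log r) (Real.log (Complex.abs c)) := by
  have hcpos : 0 < Complex.abs c := by simpa using hc
  rcases lt_or_gt_of_ne hne with h | h
  · -- r < |c| : factor out -c
    set u : ℂ := (r : ℂ) / c with hu
    have huabs : Complex.abs u < 1 := by
      rw [hu, map_div₀, Complex.abs_ofReal, abs_of_pos hr, div_lt_one hcpos]; exact h
    have key : ∀ θ : ℝ, Real.log (Complex.abs ((r : ℂ) * Complex.exp (θ * Complex.I) - c)) =
        Real.log (Complex.abs c) + Real.log (Complex.abs (1 - u * Complex.exp (θ * Complex.I))) := by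
      intro θ
      have : (r : ℂ) * Complex.exp (θ * Complex.I) - c
          = (-c) * (1 - u * Complex.exp (θ * Complex.I)) := by
        rw [hu]; field_simp [hc]
        ring
      rw [this, map_mul, Real.log_mul (by simpa using hc)
        (Complex.abs.ne_zero (ne_one_sub u huabs θ))]
      simp
    simp_rw [key]
    rw [MeasureTheory.integral_add (integrable_const _)
      (intA u huabs), lemA u huabs, setIntegral_const, smul_eq_mul, vol_Ioo]
    rw [max_eq_right ((Real.log_le_log_iff hr hcpos).mpr h.le)]
    · ring
  · -- |c| < r : factor out r e^{iθ}
    set u : ℂ := (starRingEnd ℂ) c / r with hu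
    have huabs : Complex.abs u < 1 := by
      rw [hu, map_div₀, Complex.abs_conj, Complex.abs_ofReal, abs_of_pos hr,
        div_lt_one hr]; exact h
    have key : ∀ θ : ℝ, Real.log (Complex.abs ((r : ℂ) * Complex.exp (θ * Complex.I) - c)) =
        Real.log r + Real.log (Complex.abs (1 - u * Complex.exp (θ * Complex.I))) := by
      intro θ
      have habs2 : Complex.abs ((r : ℂ) * Complex.exp (θ * Complex.I) - c)
          = r * Complex.abs (1 - u * Complex.exp (θ * Complex.I)) := by
        have conj_eq : Complex.abs (1 - u * Complex.exp (θ * Complex.I))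
            = Complex.abs (1 - (c / r) * Complex.exp (-(θ * Complex.I))) := by
          rw [← Complex.abs_conj (1 - (c / ↑r) * Complex.exp (-(θ * Complex.I)))]
          congr 1
          rw [map_sub, map_one, map_mul, ← Complex.exp_conj]
          simp [hu, map_div₀, Complex.conj_ofReal]
        rw [conj_eq]
        have : (r : ℂ) * Complex.exp (θ * Complex.I) - c
            = ((r:ℂ) * Complex.exp (θ * Complex.I)) *
              (1 - (c / r) * Complex.exp (-(θ * Complex.I))) := by
          rw [mul_sub, mul_one]
          rw [show (r:ℂ) * Complex.exp (θ * Complex.I) * (c / ↑r * Complex.exp (-(θ * Complex.I)))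
            = c * ((r:ℂ)/r) * (Complex.exp (θ * Complex.I) * Complex.exp (-(θ * Complex.I))) by ring]
          rw [← Complex.exp_add, add_neg_cancel, Complex.exp_zero]
          rw [div_self (by exact_mod_cast hr.ne')]
          ring
        rw [this, map_mul, map_mul, Complex.abs_exp]
        simp [abs_of_pos hr]
      rw [habs2, Real.log_mul hr.ne' (Complex.abs.ne_zero (ne_one_sub u huabs θ))]
    simp_rw [key]
    rw [MeasureTheory.integral_add (integrable_const _)
      (intA u huabs), lemA u huabs, setIntegral_const, smul_eq_mul, vol_Ioo]
    rw [max_eq_left ((Real.log_le_log_iff hcpos hr).mpr h.le)]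
    · ring

lemma logint : IntegrableOn Real.log (Ioc (0:ℝ) 1) := by
  have key : ∀ n : ℕ, IntegrableOn Real.log (Ioc (1/((n:ℝ)+2)) 1) := by
    intro n
    have hpos : (0:ℝ) < 1/((n:ℝ)+2) := by positivity
    have hle : 1/((n:ℝ)+2) ≤ 1 := by
      rw [div_le_one (by positivity)]
      have : (0:ℝ) ≤ (n:ℝ) := Nat.cast_nonneg n
      linarith
    exact (intervalIntegrable_log (by
      rw [Set.uIcc_of_le hle]
      intro h
      exact absurd h.1 (by linarith))).1
  apply integrableOn_Ioc_of_intervalIntegral_norm_bounded_left (I := 1)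
    (a := fun n : ℕ => 1/((n:ℝ)+2)) (l := Filter.atTop) key
  · have h : Filter.Tendsto (fun n : ℕ => ((n:ℝ)+2)⁻¹) Filter.atTop (nhds 0) :=
      tendsto_inv_atTop_zero.comp
        (Filter.tendsto_atTop_add_const_right _ 2 tendsto_natCast_atTop_atTop)
    simpa [one_div] using h
  · apply Filter.Eventually.of_forall
    intro n
    set a : ℝ := 1/((n:ℝ)+2) with ha
    have hpos : 0 < a := by positivity
    have hle : a ≤ 1 := by rw [ha]; rw [div_le_one (by positivity)]; linarith
    have h1 : ∀ x ∈ Ioc a 1, ‖Real.log x‖ = -Real.log x := by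
      intro x hx
      rw [Real.norm_eq_abs, abs_of_nonpos (Real.log_nonpos (hpos.trans hx.1).le hx.2)]
    rw [setIntegral_congr_fun measurableSet_Ioc h1]
    rw [MeasureTheory.integral_neg]
    have h2 : ∫ x in Ioc a 1, Real.log x = ∫ x in a..1, Real.log x := by
      rw [intervalIntegral.integral_of_le hle]
    rw [h2, integral_log]
    have : a * Real.log a ≤ 0 :=
      mul_nonpos_of_nonneg_of_nonpos hpos.le (Real.log_nonpos hpos.le hle)
    simp only [Real.log_one]
    nlinarith

lemma nevan (r : ℝ) (c : ℂ) (hr : 0 ≤ r) (hne : r ≠ Complex.abs c) (θ : ℝ) :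
    (r : ℂ) * Complex.exp (θ * Complex.I) - c ≠ 0 := by
  intro h
  apply hne
  have h2 : (r : ℂ) * Complex.exp (θ * Complex.I) = c := by linear_combination h
  have h3 := congrArg Complex.abs h2
  rw [map_mul, Complex.abs_exp, Complex.abs_ofReal] at h3
  norm_num at h3
  rwa [abs_of_nonneg hr] at h3

lemma cont2 (r : ℝ) (c : ℂ) (hr : 0 ≤ r) (hne : r ≠ Complex.abs c) :
    Continuous fun θ : ℝ => Real.log (Complex.abs ((r : ℂ) * Complex.exp (θ * Complex.I) - c)) := by
  have hg : Continuous fun θ : ℝ => (r : ℂ) * Complex.exp (θ * Complex.I) - c :=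
    (continuous_const.mul (Complex.continuous_exp.comp
      (Complex.continuous_ofReal.mul continuous_const))).sub continuous_const
  rw [continuous_iff_continuousAt]
  intro θ
  have h1 : ContinuousAt (fun θ : ℝ => Complex.abs ((r : ℂ) * Complex.exp (θ * Complex.I) - c)) θ :=
    (Complex.continuous_abs.comp hg).continuousAt
  exact ContinuousAt.comp (g := Real.log) (Real.continuousAt_log
    (Complex.abs.ne_zero (nevan r c hr hne θ))) h1

lemma int2 (r : ℝ) (c : ℂ) (hr : 0 ≤ r) (hne : r ≠ Complex.abs c) :
    IntegrableOn (fun θ : ℝ => Real.log (Complex.abs ((r : ℂ) * Complex.exp (θ * Complex.I) - c)))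
      (Ioo (-π) π) :=
  ((cont2 r c hr hne).integrableOn_Icc (a := -π) (b := π)).mono_set Ioo_subset_Icc_self

lemma hS_int (c : ℂ) (hc : c ≠ 0) :
    IntegrableOn (fun p : ℝ × ℝ =>
        p.1 * Real.log (Complex.abs ((p.1 : ℂ) * Complex.exp (p.2 * Complex.I) - c)))
      (Ioo (0:ℝ) 1 ×ˢ Ioo (-π) π) := by
  have hq : Continuous fun p : ℝ × ℝ => (p.1 : ℂ) * Complex.exp (p.2 * Complex.I) - c := by
    apply Continuous.sub _ continuous_const
    exact (Complex.continuous_ofReal.comp continuous_fst).mul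
      (Complex.continuous_exp.comp ((Complex.continuous_ofReal.comp continuous_snd).mul
        continuous_const))
  have hmeas0 : Measurable fun p : ℝ × ℝ =>
      p.1 * Real.log (Complex.abs ((p.1 : ℂ) * Complex.exp (p.2 * Complex.I) - c)) :=
    measurable_fst.mul (Real.measurable_log.comp (Complex.continuous_abs.comp hq).measurable)
  rw [IntegrableOn, Measure.volume_eq_prod, ← Measure.prod_restrict]
  have hmeas : AEStronglyMeasurable (fun p : ℝ × ℝ =>
      p.1 * Real.log (Complex.abs ((p.1 : ℂ) * Complex.exp (p.2 * Complex.I) - c)))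
      ((volume.restrict (Ioo (0:ℝ) 1)).prod (volume.restrict (Ioo (-π) π))) :=
    hmeas0.aestronglyMeasurable
  rw [integrable_prod_iff hmeas]
  have hρ : 0 < Complex.abs c := by simpa using hc
  have hane : ∀ᵐ r ∂(volume.restrict (Ioo (0:ℝ) 1)), r ≠ Complex.abs c := by
    apply ae_restrict_of_ae
    have hset : {r : ℝ | ¬ r ≠ Complex.abs c} = {Complex.abs c} := by ext; simp
    rw [ae_iff, hset]
    exact measure_singleton _
  have hmem := ae_restrict_mem (μ := volume) (measurableSet_Ioo (a := (0:ℝ)) (b := 1))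
  constructor
  · filter_upwards [hane, hmem] with r hr hrmem
    exact ((int2 r c hrmem.1.le hr).const_mul r)
  · set L := Real.log (2 + Complex.abs c) with hL
    have hLpos : 0 < L := Real.log_pos (by linarith)
    apply Integrable.mono' (g := fun r : ℝ => 4 * π * L + 2 * π * ‖Real.log r‖)
    · exact (integrable_const _).add
        (((logint.mono_set Ioo_subset_Ioc_self).norm).const_mul (2 * π))
    · exact hmeas.norm.integral_prod_right'
    · filter_upwards [hane, hmem] with r hr hrmem
      have hr0 : 0 < r := hrmem.1
      have hr1 : r < 1 := hrmem.2
      have hne0 : ∀ θ : ℝ, Complex.abs ((r : ℂ) * Complex.exp (θ * Complex.I) - c) ≠ 0 :=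
        fun θ => Complex.abs.ne_zero (nevan r c hr0.le hr θ)
      have hptw : ∀ θ : ℝ, ‖r * Real.log (Complex.abs ((r : ℂ) * Complex.exp (θ * Complex.I) - c))‖
          ≤ 2 * L - Real.log (Complex.abs ((r : ℂ) * Complex.exp (θ * Complex.I) - c)) := by
        intro θ
        set l := Real.log (Complex.abs ((r : ℂ) * Complex.exp (θ * Complex.I) - c)) with hl
        have h1 : ‖r * l‖ = r * |l| := by
          rw [Real.norm_eq_abs, abs_mul, abs_of_pos hr0]
        have h2 : r * |l| ≤ |l| := by
          nlinarith [abs_nonneg l]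
        have h3 : l ≤ L := by
          rw [hl, hL]
          rw [Real.log_le_log_iff (lt_of_le_of_ne (Complex.abs.nonneg _) (Ne.symm (hne0 θ))) (by linarith)]
          calc Complex.abs ((r : ℂ) * Complex.exp (θ * Complex.I) - c)
              ≤ Complex.abs ((r : ℂ) * Complex.exp (θ * Complex.I)) + Complex.abs c := by
                have h := norm_sub_le ((r : ℂ) * Complex.exp (θ * Complex.I)) c
                simpa using h
            _ ≤ 2 + Complex.abs c := by
                rw [map_mul, Complex.abs_exp, Complex.abs_ofReal, abs_of_pos hr0]
                norm_num
                linarith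
        rcases le_or_gt 0 l with h | h
        · rw [h1, abs_of_nonneg h]
          nlinarith
        · rw [h1, abs_of_neg h]
          nlinarith
      have hIl : IntegrableOn (fun θ : ℝ =>
          ‖r * Real.log (Complex.abs ((r : ℂ) * Complex.exp (θ * Complex.I) - c))‖)
          (Ioo (-π) π) := ((int2 r c hr0.le hr).const_mul r).norm
      have hIr : IntegrableOn (fun θ : ℝ =>
          2 * L - Real.log (Complex.abs ((r : ℂ) * Complex.exp (θ * Complex.I) - c)))
          (Ioo (-π) π) := (integrable_const _).sub (int2 r c hr0.le hr)
      have hmono := integral_mono hIl hIr hptw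
      have hcalc : ∫ θ in Ioo (-π) π,
          (2 * L - Real.log (Complex.abs ((r : ℂ) * Complex.exp (θ * Complex.I) - c)))
          = 4 * π * L - 2 * π * max (Real.log r) (Real.log (Complex.abs c)) := by
        rw [integral_sub (integrable_const _) (int2 r c hr0.le hr), lemB r c hr0 hc hr,
          setIntegral_const, smul_eq_mul, vol_Ioo]
        ring
      have hnn : 0 ≤ ∫ θ in Ioo (-π) π,
          ‖r * Real.log (Complex.abs ((r : ℂ) * Complex.exp (θ * Complex.I) - c))‖ :=
        integral_nonneg fun θ => norm_nonneg _
      rw [Real.norm_of_nonneg hnn]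
      have hmax : -(2 * π) * max (Real.log r) (Real.log (Complex.abs c)) ≤ 2 * π * ‖Real.log r‖ := by
        have h1 : -max (Real.log r) (Real.log (Complex.abs c)) ≤ -Real.log r :=
          neg_le_neg (le_max_left _ _)
        have h2 : -Real.log r ≤ ‖Real.log r‖ := by
          rw [Real.norm_eq_abs]; exact neg_le_abs _
        nlinarith [pi_pos]
      calc (∫ θ in Ioo (-π) π,
            ‖r * Real.log (Complex.abs ((r : ℂ) * Complex.exp (θ * Complex.I) - c))‖)
          ≤ 4 * π * L - 2 * π * max (Real.log r) (Real.log (Complex.abs c)) := by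
            rw [← hcalc]; exact hmono
        _ ≤ 4 * π * L + 2 * π * ‖Real.log r‖ := by nlinarith [hmax]

lemma radial (c : ℂ) (hc : c ≠ 0) :
    (∫ p in Ioo (0:ℝ) 1 ×ˢ Ioo (-π) π,
      p.1 * Real.log (Complex.abs ((p.1 : ℂ) * Complex.exp (p.2 * Complex.I) - c)))
    = π * (Real.log (Complex.abs c) +
        if Complex.abs c < 1 then ((Complex.abs c) ^ 2 - 1) / 2 - Real.log (Complex.abs c)
        else 0) := by
  have hρ : 0 < Complex.abs c := by simpa using hc
  set ρ := Complex.abs c with hρdef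
  -- Fubini
  have hfub : (∫ p in Ioo (0:ℝ) 1 ×ˢ Ioo (-π) π,
      p.1 * Real.log (Complex.abs ((p.1 : ℂ) * Complex.exp (p.2 * Complex.I) - c)))
      = ∫ r in Ioo (0:ℝ) 1, ∫ θ in Ioo (-π) π,
          r * Real.log (Complex.abs ((r : ℂ) * Complex.exp (θ * Complex.I) - c)) := by
    rw [Measure.volume_eq_prod]
    apply setIntegral_prod
    have h := hS_int c hc
    rwa [IntegrableOn, Measure.volume_eq_prod] at h
  rw [hfub]
  -- replace inner integral a.e.
  have hane : ∀ᵐ r ∂(volume.restrict (Ioo (0:ℝ) 1)), r ≠ ρ := by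
    apply ae_restrict_of_ae
    have hset : {r : ℝ | ¬ r ≠ ρ} = {ρ} := by ext; simp
    rw [ae_iff, hset]
    exact measure_singleton _
  have hmem := ae_restrict_mem (μ := volume) (measurableSet_Ioo (a := (0:ℝ)) (b := 1))
  have hcongr : (∫ r in Ioo (0:ℝ) 1, ∫ θ in Ioo (-π) π,
      r * Real.log (Complex.abs ((r : ℂ) * Complex.exp (θ * Complex.I) - c)))
      = ∫ r in Ioo (0:ℝ) 1, 2 * π * r * max (Real.log r) (Real.log ρ) := by
    apply MeasureTheory.integral_congr_ae
    filter_upwards [hane, hmem] with r hr hrmem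
    rw [MeasureTheory.integral_const_mul, lemB r c hrmem.1 hc hr]
    ring
  rw [hcongr]
  by_cases hlt : ρ < 1
  · -- small root case
    rw [if_pos hlt]
    have heq : (∫ r in Ioo (0:ℝ) 1, 2 * π * r * max (Real.log r) (Real.log ρ))
        = ∫ r in (0:ℝ)..1, 2 * π * r * max (Real.log r) (Real.log ρ) := by
      rw [intervalIntegral.integral_of_le zero_le_one, integral_Ioc_eq_integral_Ioo]
    rw [heq]
    have hint1 : IntervalIntegrable (fun r : ℝ => 2 * π * r * max (Real.log r) (Real.log ρ))
        volume 0 ρ := by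
      rw [intervalIntegrable_iff_integrableOn_Ioc_of_le hρ.le]
      have hg : IntegrableOn (fun r : ℝ => 2 * π * Real.log ρ * r) (Ioc (0:ℝ) ρ) :=
        ((continuous_const.mul continuous_id).integrableOn_Icc (a := (0:ℝ)) (b := ρ)).mono_set
          Ioc_subset_Icc_self
      apply hg.congr_fun ?_ measurableSet_Ioc
      intro r hrmem
      have hmax : max (Real.log r) (Real.log ρ) = Real.log ρ :=
        max_eq_right ((Real.log_le_log_iff hrmem.1 hρ).mpr hrmem.2)
      simp only [hmax]
      ring
    have hint2 : IntervalIntegrable (fun r : ℝ => 2 * π * r * max (Real.log r) (Real.log ρ))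
        volume ρ 1 := by
      rw [intervalIntegrable_iff_integrableOn_Ioc_of_le hlt.le]
      have hg : IntegrableOn (fun r : ℝ => 2 * π * r * Real.log r) (Ioc ρ 1) := by
        apply (ContinuousOn.integrableOn_compact (isCompact_Icc (a := ρ) (b := 1)) ?_).mono_set
          Ioc_subset_Icc_self
        exact ((continuous_const.mul continuous_id).continuousOn).mul
          (Real.continuousOn_log.mono (fun x hx => ne_of_gt (lt_of_lt_of_le hρ hx.1)))
      apply hg.congr_fun ?_ measurableSet_Ioc
      intro r hrmem
      have hmax : max (Real.log r) (Real.log ρ) = Real.log r :=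
        max_eq_left ((Real.log_le_log_iff hρ (hρ.trans hrmem.1)).mpr hrmem.1.le)
      simp only [hmax]
    rw [← intervalIntegral.integral_add_adjacent_intervals hint1 hint2]
    -- first piece
    have hv1 : (∫ r in (0:ℝ)..ρ, 2 * π * r * max (Real.log r) (Real.log ρ))
        = π * ρ ^ 2 * Real.log ρ := by
      have hEq : EqOn (fun r : ℝ => 2 * π * r * max (Real.log r) (Real.log ρ))
          (fun r : ℝ => (2 * π * Real.log ρ) * r) (uIcc (0:ℝ) ρ) := by
        intro r hrmem
        rw [uIcc_of_le hρ.le] at hrmem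
        rcases eq_or_lt_of_le hrmem.1 with h0 | h0
        · simp [← h0]
        have hmax : max (Real.log r) (Real.log ρ) = Real.log ρ :=
          max_eq_right ((Real.log_le_log_iff h0 hρ).mpr hrmem.2)
        simp only [hmax]
        ring
      rw [intervalIntegral.integral_congr hEq, intervalIntegral.integral_const_mul, integral_id]
      ring
    -- second piece
    have hv2 : (∫ r in ρ..1, 2 * π * r * max (Real.log r) (Real.log ρ))
        = -π / 2 - (π * ρ ^ 2 * Real.log ρ - π * ρ ^ 2 / 2) := by
      have hEq : EqOn (fun r : ℝ => 2 * π * r * max (Real.log r) (Real.log ρ))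
          (fun r : ℝ => 2 * π * r * Real.log r) (uIcc ρ 1) := by
        intro r hrmem
        rw [uIcc_of_le hlt.le] at hrmem
        have hr0 : 0 < r := hρ.trans_le hrmem.1
        have hmax : max (Real.log r) (Real.log ρ) = Real.log r :=
          max_eq_left ((Real.log_le_log_iff hρ hr0).mpr hrmem.1)
        simp only [hmax]
      rw [intervalIntegral.integral_congr hEq]
      have hFTC := intervalIntegral.integral_eq_sub_of_hasDerivAt
        (f := fun r : ℝ => π * r ^ 2 * Real.log r - π * r ^ 2 / 2)
        (f' := fun r : ℝ => 2 * π * r * Real.log r) (a := ρ) (b := 1) ?_ ?_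
      · rw [hFTC]
        norm_num
        ring
      · intro x hx
        rw [uIcc_of_le hlt.le] at hx
        have hx0 : 0 < x := hρ.trans_le hx.1
        have h1 : HasDerivAt (fun r : ℝ => π * r ^ 2 * Real.log r)
            (π * (2 * x) * Real.log x + π * x ^ 2 * (1 / x)) x := by
          have ha : HasDerivAt (fun r : ℝ => π * r ^ 2) (π * (2 * x)) x := by
            simpa [mul_comm] using (hasDerivAt_pow 2 x).const_mul π
          have hb : HasDerivAt Real.log (1 / x) x := by
            simpa [one_div] using Real.hasDerivAt_log hx0.ne'
          exact ha.mul hb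
        have h2 : HasDerivAt (fun r : ℝ => π * r ^ 2 / 2) (π * x) x := by
          have : HasDerivAt (fun r : ℝ => π * r ^ 2) (π * (2 * x)) x := by
            simpa [mul_comm] using (hasDerivAt_pow 2 x).const_mul π
          have := this.div_const 2
          refine this.congr_deriv ?_
          ring
        have := h1.sub h2
        refine this.congr_deriv ?_
        field_simp
        ring
      · apply ContinuousOn.intervalIntegrable
        rw [uIcc_of_le hlt.le]
        exact ((continuous_const.mul continuous_id).continuousOn).mul
          (Real.continuousOn_log.mono (fun x hx => ne_of_gt (hρ.trans_le hx.1)))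
    rw [hv1, hv2]
    ring
  · -- big root case
    rw [if_neg hlt]
    push_neg at hlt
    have hcongr2 : (∫ r in Ioo (0:ℝ) 1, 2 * π * r * max (Real.log r) (Real.log ρ))
        = ∫ r in Ioo (0:ℝ) 1, (2 * π * Real.log ρ) * r := by
      apply setIntegral_congr_fun measurableSet_Ioo
      intro r hrmem
      have hmax : max (Real.log r) (Real.log ρ) = Real.log ρ :=
        max_eq_right ((Real.log_neg hrmem.1 hrmem.2).le.trans (Real.log_nonneg hlt))
      simp only [hmax]
      ring
    rw [hcongr2, MeasureTheory.integral_const_mul]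
    have : (∫ r in Ioo (0:ℝ) 1, r) = 1/2 := by
      rw [← integral_Ioc_eq_integral_Ioo, ← intervalIntegral.integral_of_le zero_le_one,
        integral_id]
      norm_num
    rw [this]
    ring

theorem stmt17 (N : ℕ) (a : ℂ) (z : Fin N → ℂ) (ha : a ≠ 0) (hz : ∀ n, z n ≠ 0) :
    (1 / Real.pi) *
        ∫ w in Metric.ball (0 : ℂ) 1,
          Real.log (‖a * ∏ n, (w - z n)‖) =
      Real.log (‖a * ∏ n, ((0 : ℂ) - z n)‖) +
        ∑ n ∈ Finset.univ.filter fun n => ‖z n‖ < 1,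
          ((‖z n‖ ^ 2 - 1) / 2 - Real.log ‖z n‖) := by
  show (1 / Real.pi) *
        ∫ w in Metric.ball (0 : ℂ) 1,
          Real.log (Complex.abs (a * ∏ n, (w - z n))) =
      Real.log (Complex.abs (a * ∏ n, ((0 : ℂ) - z n))) +
        ∑ n ∈ Finset.univ.filter fun n => Complex.abs (z n) < 1,
          (((Complex.abs (z n)) ^ 2 - 1) / 2 - Real.log (Complex.abs (z n)))
  set S : Set (ℝ × ℝ) := Ioo (0:ℝ) 1 ×ˢ Ioo (-π) π with hSdef
  set f : ℂ → ℝ := fun w => Real.log (Complex.abs (a * ∏ n, (w - z n))) with hfdef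
  set G : ℝ × ℝ → ℝ := fun p =>
    p.1 * Real.log (Complex.abs (a * ∏ n, ((p.1 : ℂ) * Complex.exp (p.2 * Complex.I) - z n)))
    with hGdef
  have hSmeas : MeasurableSet S := (measurableSet_Ioo.prod measurableSet_Ioo)
  -- Step 1-3 : polar coordinates
  have step1 : (∫ w in Metric.ball (0 : ℂ) 1, f w) = ∫ p in S, G p := by
    rw [← MeasureTheory.integral_indicator measurableSet_ball,
      ← Complex.integral_comp_polarCoord_symm ((Metric.ball (0:ℂ) 1).indicator f)]
    have hEqOn : ∀ p ∈ polarCoord.target,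
        p.1 • ((Metric.ball (0:ℂ) 1).indicator f) (Complex.polarCoord.symm p)
          = S.indicator G p := by
      intro p hp
      rw [show polarCoord.target = Ioi (0:ℝ) ×ˢ Ioo (-π) π from rfl] at hp
      have hp1 : 0 < p.1 := hp.1
      have habs : Complex.abs (Complex.polarCoord.symm p) = p.1 := by
        rw [Complex.polarCoord_symm_abs, abs_of_pos hp1]
      have hw : Complex.polarCoord.symm p = (p.1 : ℂ) * Complex.exp (p.2 * Complex.I) := by
        rw [Complex.polarCoord_symm_apply, Complex.exp_mul_I]
        push_cast
        ring
      by_cases h1 : p.1 < 1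
      · have hmem : Complex.polarCoord.symm p ∈ Metric.ball (0:ℂ) 1 := by
          rw [Metric.mem_ball, dist_zero_right, Complex.norm_eq_abs, habs]; exact h1
        have hmemS : p ∈ S := ⟨⟨hp1, h1⟩, hp.2⟩
        rw [indicator_of_mem hmem, indicator_of_mem hmemS, hGdef, hfdef]
        simp only [smul_eq_mul, hw]
      · have hmem : Complex.polarCoord.symm p ∉ Metric.ball (0:ℂ) 1 := by
          rw [Metric.mem_ball, dist_zero_right, Complex.norm_eq_abs, habs]; exact h1
        have hmemS : p ∉ S := fun hmemS => h1 hmemS.1.2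
        rw [indicator_of_notMem hmem, indicator_of_notMem hmemS, smul_zero]
    rw [setIntegral_congr_fun polarCoord.open_target.measurableSet hEqOn,
      setIntegral_indicator hSmeas,
      inter_eq_self_of_subset_right (by
        rw [show polarCoord.target = Ioi (0:ℝ) ×ˢ Ioo (-π) π from rfl, hSdef]
        exact prod_mono_left Ioo_subset_Ioi_self)]
  -- Step 4 : split the log a.e.
  have hane : ∀ᵐ p ∂(volume.restrict S), ∀ n, p.1 ≠ Complex.abs (z n) := by
    apply ae_restrict_of_ae
    rw [ae_all_iff]
    intro n
    have hset : {p : ℝ × ℝ | ¬ p.1 ≠ Complex.abs (z n)}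
        = ({Complex.abs (z n)} : Set ℝ) ×ˢ (univ : Set ℝ) := by
      ext p
      simp only [mem_setOf_eq, not_not, Set.mem_prod, mem_singleton_iff, mem_univ, and_true]
    rw [ae_iff, hset, Measure.volume_eq_prod, Measure.prod_prod, measure_singleton, zero_mul]
  have hmemS := ae_restrict_mem (μ := volume) hSmeas
  have step4 : (∫ p in S, G p)
      = ∫ p in S, (p.1 * Real.log (Complex.abs a) + ∑ n, p.1 *
          Real.log (Complex.abs ((p.1 : ℂ) * Complex.exp (p.2 * Complex.I) - z n))) := by
    apply MeasureTheory.integral_congr_ae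
    filter_upwards [hane, hmemS] with p hp hpS
    have hp1 : 0 < p.1 := hpS.1.1
    have hne : ∀ n : Fin N, (p.1 : ℂ) * Complex.exp (p.2 * Complex.I) - z n ≠ 0 := by
      intro n h
      apply hp n
      have h2 : (p.1 : ℂ) * Complex.exp (p.2 * Complex.I) = z n := by linear_combination h
      have h3 := congrArg Complex.abs h2
      rw [map_mul, Complex.abs_exp, Complex.abs_ofReal] at h3
      norm_num at h3
      rwa [abs_of_pos hp1] at h3
    rw [hGdef]
    simp only []
    rw [map_mul, Real.log_mul (Complex.abs.ne_zero ha)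
      (by
        rw [map_prod]
        exact Finset.prod_ne_zero_iff.mpr fun n _ => Complex.abs.ne_zero (hne n)),
      map_prod, Real.log_prod (fun n _ => Complex.abs.ne_zero (hne n)),
      mul_add, Finset.mul_sum]
  -- Step 5 : split the integral
  have hconst : IntegrableOn (fun p : ℝ × ℝ => p.1 * Real.log (Complex.abs a)) S := by
    apply ((ContinuousOn.integrableOn_compact
      ((isCompact_Icc (a := (0:ℝ)) (b := 1)).prod (isCompact_Icc (a := -π) (b := π)))
      (continuous_fst.mul continuous_const).continuousOn).mono_set ?_)
    exact prod_mono Ioo_subset_Icc_self Ioo_subset_Icc_self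
  have step5 : (∫ p in S, (p.1 * Real.log (Complex.abs a) + ∑ n, p.1 *
          Real.log (Complex.abs ((p.1 : ℂ) * Complex.exp (p.2 * Complex.I) - z n))))
      = (∫ p in S, p.1 * Real.log (Complex.abs a)) + ∑ n, ∫ p in S, p.1 *
          Real.log (Complex.abs ((p.1 : ℂ) * Complex.exp (p.2 * Complex.I) - z n)) := by
    rw [integral_add hconst (integrable_finset_sum _ fun n _ => hS_int (z n) (hz n)),
      integral_finset_sum _ fun n _ => hS_int (z n) (hz n)]
  -- Step 6 : values
  have hconstval : (∫ p in S, p.1 * Real.log (Complex.abs a))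
      = π * Real.log (Complex.abs a) := by
    rw [MeasureTheory.integral_mul_const]
    have hfst : (∫ p in S, p.1) = π := by
      have hint : IntegrableOn (fun p : ℝ × ℝ => p.1) S := by
        apply ((ContinuousOn.integrableOn_compact
          ((isCompact_Icc (a := (0:ℝ)) (b := 1)).prod (isCompact_Icc (a := -π) (b := π)))
          continuous_fst.continuousOn).mono_set ?_)
        exact prod_mono Ioo_subset_Icc_self Ioo_subset_Icc_self
      rw [hSdef, Measure.volume_eq_prod] at hint ⊢
      rw [setIntegral_prod _ hint]
      have hinner : ∀ r : ℝ, (∫ _ in Ioo (-π) π, r) = (2 * π) * r := by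
        intro r
        rw [setIntegral_const, vol_Ioo, smul_eq_mul]
      simp_rw [hinner]
      rw [MeasureTheory.integral_const_mul]
      have : (∫ r in Ioo (0:ℝ) 1, r) = 1/2 := by
        rw [← integral_Ioc_eq_integral_Ioo, ← intervalIntegral.integral_of_le zero_le_one,
          integral_id]
        norm_num
      rw [this]
      ring
    rw [hfst]
  have step6 : (∫ w in Metric.ball (0 : ℂ) 1, f w)
      = π * Real.log (Complex.abs a) + ∑ n, π * (Real.log (Complex.abs (z n)) +
          if Complex.abs (z n) < 1 then ((Complex.abs (z n)) ^ 2 - 1) / 2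
            - Real.log (Complex.abs (z n)) else 0) := by
    rw [step1, step4, step5, hconstval]
    congr 1
    exact Finset.sum_congr rfl fun n _ => radial (z n) (hz n)
  -- RHS rewrite
  have hrhs : Real.log (Complex.abs (a * ∏ n, ((0 : ℂ) - z n)))
      = Real.log (Complex.abs a) + ∑ n, Real.log (Complex.abs (z n)) := by
    rw [map_mul, Real.log_mul (Complex.abs.ne_zero ha)
      (by
        rw [map_prod]
        exact Finset.prod_ne_zero_iff.mpr fun n _ => Complex.abs.ne_zero
          (by simpa using (hz n))),
      map_prod, Real.log_prod (fun n _ => Complex.abs.ne_zero (by simpa using hz n))]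
    congr 1
    apply Finset.sum_congr rfl
    intro n _
    rw [zero_sub, map_neg_eq_map]
  rw [step6, hrhs, Finset.sum_filter]
  have hπ : π ≠ 0 := pi_ne_zero
  rw [← Finset.mul_sum, Finset.sum_add_distrib]
  field_simp
  ring
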